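/- Consider a two-layer network with radial rescaling activation σ(z) = f(‖z‖)z and loss invariant under the O(h)-action g·(U,V) = (Ug⁻¹, gV). Then along any gradient flow trajectory, V V̇ᵀ - V̇Vᵀ + UᵀU̇ - U̇ᵀU = 0, where dots denote time derivatives under gradient flow. -/

import Mathlib

open Matrix

attribute [local instance] Matrix.frobeniusNormedAddCommGroup Matrix.frobeniusNormedSpace

private theorem hasDerivAt_const_mul_mat {k l r : ℕ} (C : Matrix (Fin k) (Fin l) ℝ)
    {f : ℝ → Matrix (Fin l) (Fin r) ℝ} {f' : Matrix (Fin l) (Fin r) ℝ} {s : ℝ}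
    (hf : HasDerivAt f f' s) : HasDerivAt (fun x => C * f x) (C * f') s := by
  let e : Matrix (Fin l) (Fin r) ℝ →ₗ[ℝ] Matrix (Fin k) (Fin r) ℝ :=
    { toFun := fun A => C * A
      map_add' := fun A B => Matrix.mul_add C A B
      map_smul' := fun c A => by simp [Matrix.mul_smul] }
  exact e.toContinuousLinearMap.hasFDerivAt.comp_hasDerivAt s hf

private theorem hasDerivAt_mul_const_mat {k l r : ℕ} (C : Matrix (Fin l) (Fin r) ℝ)
    {f : ℝ → Matrix (Fin k) (Fin l) ℝ} {f' : Matrix (Fin k) (Fin l) ℝ} {s : ℝ}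
    (hf : HasDerivAt f f' s) : HasDerivAt (fun x => f x * C) (f' * C) s := by
  let e : Matrix (Fin k) (Fin l) ℝ →ₗ[ℝ] Matrix (Fin k) (Fin r) ℝ :=
    { toFun := fun A => A * C
      map_add' := fun A B => Matrix.add_mul A B C
      map_smul' := fun c A => by simp [Matrix.smul_mul] }
  exact e.toContinuousLinearMap.hasFDerivAt.comp_hasDerivAt s hf

/-- Two-layer network with a loss invariant under the `O(h)` action
`g·(U,V) = (Ug⁻¹, gV)`. Along any gradient flow trajectory (`U̇ = -∂L/∂U`,
`V̇ = -∂L/∂V`, with gradients taken for the Frobenius inner product), one has the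
angular-momentum cancellation `V V̇ᵀ - V̇ Vᵀ + Uᵀ U̇ - U̇ᵀ U = 0`. -/
theorem angular_momentum_cancellation
    {m h n : ℕ}
    (L : Matrix (Fin m) (Fin h) ℝ → Matrix (Fin h) (Fin n) ℝ → ℝ)
    (hLdiff : Differentiable ℝ
      (fun p : Matrix (Fin m) (Fin h) ℝ × Matrix (Fin h) (Fin n) ℝ => L p.1 p.2))
    (hinv : ∀ g : Matrix (Fin h) (Fin h) ℝ, gᵀ * g = 1 →
      ∀ (U : Matrix (Fin m) (Fin h) ℝ) (V : Matrix (Fin h) (Fin n) ℝ),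
        L (U * g⁻¹) (g * V) = L U V)
    (U dU : ℝ → Matrix (Fin m) (Fin h) ℝ) (V dV : ℝ → Matrix (Fin h) (Fin n) ℝ)
    (hU : ∀ t : ℝ, HasDerivAt U (dU t) t)
    (hV : ∀ t : ℝ, HasDerivAt V (dV t) t)
    (hgrad : ∀ (t : ℝ) (A : Matrix (Fin m) (Fin h) ℝ) (B : Matrix (Fin h) (Fin n) ℝ),
      HasDerivAt (fun s : ℝ => L (U t + s • A) (V t + s • B))
        (-(Matrix.trace ((dU t)ᵀ * A) + Matrix.trace ((dV t)ᵀ * B))) 0)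
    (t : ℝ) :
    V t * (dV t)ᵀ - dV t * (V t)ᵀ + (U t)ᵀ * dU t - (dU t)ᵀ * U t = 0 := by
  classical
  letI : NormedRing (Matrix (Fin h) (Fin h) ℝ) := Matrix.frobeniusNormedRing
  letI : NormedAlgebra ℝ (Matrix (Fin h) (Fin h) ℝ) := Matrix.frobeniusNormedAlgebra
  -- Notation
  set F : Matrix (Fin m) (Fin h) ℝ × Matrix (Fin h) (Fin n) ℝ → ℝ :=
    fun p => L p.1 p.2 with hF
  -- the Fréchet derivative of F at (U t, V t)
  set D := fderiv ℝ F (U t, V t) with hD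
  -- Step 1: the Fréchet derivative in direction (A, B)
  have hDval : ∀ (A : Matrix (Fin m) (Fin h) ℝ) (B : Matrix (Fin h) (Fin n) ℝ),
      D (A, B) = -(Matrix.trace ((dU t)ᵀ * A) + Matrix.trace ((dV t)ᵀ * B)) := by
    intro A B
    have hline : HasDerivAt (fun s : ℝ => ((U t + s • A, V t + s • B) :
        Matrix (Fin m) (Fin h) ℝ × Matrix (Fin h) (Fin n) ℝ)) (A, B) 0 := by
      have h1 : HasDerivAt (fun s : ℝ => U t + s • A) A 0 := by
        have h' := ((hasDerivAt_id (0:ℝ)).smul_const A).const_add (U t)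
        simp only [one_smul, id_eq] at h'
        exact h'
      have h2 : HasDerivAt (fun s : ℝ => V t + s • B) B 0 := by
        have h' := ((hasDerivAt_id (0:ℝ)).smul_const B).const_add (V t)
        simp only [one_smul, id_eq] at h'
        exact h'
      exact h1.prodMk h2
    have hFd : HasFDerivAt F D ((fun s : ℝ => ((U t + s • A, V t + s • B) :
        Matrix (Fin m) (Fin h) ℝ × Matrix (Fin h) (Fin n) ℝ)) 0) := by
      simpa using (hLdiff (U t, V t)).hasFDerivAt
    have hcomp := hFd.comp_hasDerivAt 0 hline
    exact (hcomp.unique (hgrad t A B)).symm ▸ rfl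
  -- Step 2: first-order consequence of invariance for antisymmetric X
  have key : ∀ X : Matrix (Fin h) (Fin h) ℝ, Xᵀ = -X →
      Matrix.trace ((dU t)ᵀ * (U t * X)) = Matrix.trace ((dV t)ᵀ * (X * V t)) := by
    intro X hX
    -- the orthogonal one-parameter group
    set g : ℝ → Matrix (Fin h) (Fin h) ℝ := fun s => NormedSpace.exp (s • X) with hg
    have horth : ∀ s : ℝ, (g s)ᵀ * g s = 1 := by
      intro s
      have h1 : (s • X)ᵀ = -(s • X) := by rw [Matrix.transpose_smul, hX, smul_neg]
      show (NormedSpace.exp (s • X))ᵀ * NormedSpace.exp (s • X) = 1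
      rw [← Matrix.exp_transpose, h1,
        ← Matrix.exp_add_of_commute (-(s • X)) (s • X)
          ((Commute.refl (s • X)).neg_left),
        neg_add_cancel, NormedSpace.exp_zero]
    have hginv : ∀ s : ℝ, (g s)⁻¹ = NormedSpace.exp (s • (-X)) := by
      intro s
      rw [hg, ← Matrix.exp_neg, smul_neg]
    -- the curve
    set c : ℝ → Matrix (Fin m) (Fin h) ℝ × Matrix (Fin h) (Fin n) ℝ :=
      fun s => (U t * NormedSpace.exp (s • (-X)), NormedSpace.exp (s • X) * V t) with hc
    have hconst : ∀ s : ℝ, F (c s) = L (U t) (V t) := by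
      intro s
      have := hinv (g s) (horth s) (U t) (V t)
      rw [hc, hF]
      simpa [hginv s] using this
    -- derivative of the curve at 0
    have hc1 : HasDerivAt (fun s : ℝ => U t * NormedSpace.exp (s • (-X)))
        (U t * (-X)) 0 := by
      have := hasDerivAt_exp_smul_const (𝕂 := ℝ) (-X) (0 : ℝ)
      simp only [zero_smul, NormedSpace.exp_zero, one_mul] at this
      exact hasDerivAt_const_mul_mat (U t) this
    have hc2 : HasDerivAt (fun s : ℝ => NormedSpace.exp (s • X) * V t)
        (X * V t) 0 := by
      have := hasDerivAt_exp_smul_const (𝕂 := ℝ) X (0 : ℝ)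
      simp only [zero_smul, NormedSpace.exp_zero, one_mul] at this
      exact hasDerivAt_mul_const_mat (V t) this
    have hcd : HasDerivAt c (U t * (-X), X * V t) 0 := hc1.prodMk hc2
    have hFd : HasFDerivAt F D (c 0) := by
      have : c 0 = (U t, V t) := by rw [hc]; simp
      rw [this]
      exact (hLdiff (U t, V t)).hasFDerivAt
    have hchain : HasDerivAt (fun s => F (c s)) (D (U t * (-X), X * V t)) 0 :=
      hFd.comp_hasDerivAt 0 hcd
    have hzero : HasDerivAt (fun s => F (c s)) 0 0 := by
      have : (fun s => F (c s)) = fun _ => L (U t) (V t) := funext hconst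
      rw [this]; exact hasDerivAt_const 0 _
    have h0 : D (U t * (-X), X * V t) = 0 := hchain.unique hzero
    rw [hDval] at h0
    have : Matrix.trace ((dU t)ᵀ * (U t * (-X))) = - Matrix.trace ((dU t)ᵀ * (U t * X)) := by
      rw [Matrix.mul_neg, Matrix.mul_neg, Matrix.trace_neg]
    rw [this] at h0
    linarith [h0]
  -- Step 3: apply to the antisymmetric matrix S and conclude
  set S : Matrix (Fin h) (Fin h) ℝ :=
    V t * (dV t)ᵀ - dV t * (V t)ᵀ + (U t)ᵀ * dU t - (dU t)ᵀ * U t with hS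
  have hSt : Sᵀ = -S := by
    rw [hS]
    simp only [Matrix.transpose_sub, Matrix.transpose_add, Matrix.transpose_mul,
      Matrix.transpose_transpose]
    abel
  set P : Matrix (Fin h) (Fin h) ℝ := V t * (dV t)ᵀ - (dU t)ᵀ * U t with hP
  have hSP : S = P - Pᵀ := by
    rw [hS, hP]
    simp only [Matrix.transpose_sub, Matrix.transpose_mul, Matrix.transpose_transpose]
    abel
  have hPS : Matrix.trace (P * S) = 0 := by
    have hk := key S hSt
    have h1 : Matrix.trace ((dU t)ᵀ * (U t * S)) = Matrix.trace ((dU t)ᵀ * U t * S) := by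
      rw [Matrix.mul_assoc]
    have h2 : Matrix.trace ((dV t)ᵀ * (S * V t)) = Matrix.trace (V t * (dV t)ᵀ * S) := by
      rw [← Matrix.mul_assoc, Matrix.trace_mul_cycle]
    rw [hP, Matrix.sub_mul, Matrix.trace_sub]
    rw [h1, h2] at hk
    rw [← hk]
    ring
  have hPtS : Matrix.trace (Pᵀ * S) = 0 := by
    have : Matrix.trace (Pᵀ * S) = Matrix.trace (Sᵀ * P) := by
      rw [← Matrix.trace_transpose (Pᵀ * S), Matrix.transpose_mul, Matrix.transpose_transpose]
    rw [this, hSt, Matrix.neg_mul, Matrix.trace_neg, Matrix.trace_mul_comm, hPS, neg_zero]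
  have htr0 : Matrix.trace (S * Sᵀ) = 0 := by
    have hStP : Sᵀ = Pᵀ - P := by rw [hSP]; simp [Matrix.transpose_sub]
    rw [hStP, Matrix.mul_sub, Matrix.trace_sub, Matrix.trace_mul_comm S Pᵀ,
      Matrix.trace_mul_comm S P, hPS, hPtS, sub_zero]
  have hss : Matrix.trace (S * Sᵀ) = ∑ i, ∑ j, (S i j) ^ 2 := by
    simp [Matrix.trace, Matrix.diag, Matrix.mul_apply, Matrix.transpose_apply, sq]
  have hzero : ∀ i j, S i j = 0 := by
    intro i j
    have h1 : ∑ i, ∑ j, (S i j) ^ 2 = 0 := by rw [← hss, htr0]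
    have h2 := (Finset.sum_eq_zero_iff_of_nonneg
      (fun i _ => Finset.sum_nonneg fun j _ => sq_nonneg (S i j))).1 h1 i (Finset.mem_univ i)
    have h3 := (Finset.sum_eq_zero_iff_of_nonneg
      (fun j _ => sq_nonneg (S i j))).1 h2 j (Finset.mem_univ j)
    exact pow_eq_zero_iff (two_ne_zero) |>.1 h3
  show S = 0
  ext i j
  exact hzero i j
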